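/- Let a₁ ≥ a₂ ≥ ⋯ ≥ a_n and b₁ ≥ b₂ ≥ ⋯ ≥ b_m be sequences of nonnegative integers with a₁ > a₂ + 1 and b₁ > b₂ + 1, n = a₁ + 1 and m = b₁ + 1. If the rational functions ∏_{i=1}^{a₁}(1−q^i) / ∏_{i=2}^{n}(1−q^{a_i+1}) and ∏_{i=1}^{b₁}(1−q^i) / ∏_{i=2}^{m}(1−q^{b_i+1}) are equal, then n = m and a_i = b_i for all i. -/

import Mathlib

open Polynomial


lemma sup_mem_of_ne_zero' {s : Multiset ℕ} (h : s ≠ 0) : s.sup ∈ s := by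
  induction s using Multiset.induction_on with
  | empty => exact absurd rfl h
  | cons a s ih =>
    rw [Multiset.sup_cons]
    rcases eq_or_ne s 0 with rfl | hs
    · simp
    · rcases le_total a s.sup with h1 | h1
      · rw [sup_eq_right.2 h1]; exact Multiset.mem_cons_of_mem (ih hs)
      · rw [sup_eq_left.2 h1]; exact Multiset.mem_cons_self a s

lemma multiset_eq_of_countP_dvd (S : Multiset ℕ) : ∀ T : Multiset ℕ,
    (∀ x ∈ S, 0 < x) → (∀ x ∈ T, 0 < x) →
    (∀ d, 0 < d → S.countP (d ∣ ·) = T.countP (d ∣ ·)) → S = T := by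
  induction S using Multiset.strongInductionOn with
  | ih S IH =>
  intro T hS hT h
  rcases eq_or_ne (S + T) 0 with h0 | h0
  · have h1 : S ≤ 0 := le_trans (Multiset.le_add_right S T) (le_of_eq h0)
    have h2 : T ≤ 0 := le_trans (Multiset.le_add_left T S) (le_of_eq h0)
    rw [Multiset.le_zero.1 h1, Multiset.le_zero.1 h2]
  · set M := (S + T).sup with hM
    have hMmem : M ∈ S + T := sup_mem_of_ne_zero' h0
    have hMpos : 0 < M := by
      rcases Multiset.mem_add.1 hMmem with h1 | h1
      exacts [hS _ h1, hT _ h1]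
    have key : ∀ U : Multiset ℕ, (∀ x ∈ U, 0 < x) → U ≤ S + T →
        U.countP (M ∣ ·) = U.count M := by
      intro U hU hle
      rw [Multiset.count]
      refine Multiset.countP_congr rfl fun x hx => ?_
      have hxM : x ≤ M := Multiset.le_sup (Multiset.mem_of_le hle hx)
      have : M ∣ x ↔ M = x :=
        ⟨fun hd => le_antisymm (Nat.le_of_dvd (hU _ hx) hd) hxM, fun he => he ▸ dvd_rfl⟩
      simp [this]
    have hcount : S.count M = T.count M := by
      rw [← key S hS (Multiset.le_add_right _ _), ← key T hT (Multiset.le_add_left _ _),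
        h M hMpos]
    have hMS : M ∈ S ∧ M ∈ T := by
      rcases Multiset.mem_add.1 hMmem with h1 | h1
      · exact ⟨h1, Multiset.count_pos.1 (hcount ▸ Multiset.count_pos.2 h1)⟩
      · exact ⟨Multiset.count_pos.1 (hcount ▸ Multiset.count_pos.2 h1), h1⟩
    have hScons : M ::ₘ S.erase M = S := Multiset.cons_erase hMS.1
    have hTcons : M ::ₘ T.erase M = T := Multiset.cons_erase hMS.2
    have hrec : S.erase M = T.erase M := by
      refine IH _ (Multiset.erase_lt.2 hMS.1) _
        (fun x hx => hS _ (Multiset.mem_of_mem_erase hx))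
        (fun x hx => hT _ (Multiset.mem_of_mem_erase hx)) fun d hd => ?_
      have := h d hd
      rw [← hScons, ← hTcons, Multiset.countP_cons, Multiset.countP_cons] at this
      omega
    rw [← hScons, ← hTcons, hrec]

lemma one_sub_X_pow_ne_zero {F : Type*} [Field F] {k : ℕ} (hk : 0 < k) :
    (1 - X ^ k : F[X]) ≠ 0 := by
  intro h
  have := congrArg (Polynomial.eval 0) h
  simp [zero_pow hk.ne'] at this

lemma rootMultiplicity_one_sub_X_pow {k : ℕ} (hk : 0 < k) (z : ℂ) :
    rootMultiplicity z ((1 : ℂ[X]) - X ^ k) = if z ^ k = 1 then 1 else 0 := by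
  have hne : ((X : ℂ[X]) ^ k - 1) ≠ 0 := by
    intro h
    have := congrArg (Polynomial.eval 0) h
    simp [zero_pow hk.ne'] at this
  have hfac : (1 - X ^ k : ℂ[X]) = C (-1) * (X ^ k - 1) := by
    rw [map_neg, map_one]; ring
  have hCne : (C (-1) : ℂ[X]) ≠ 0 := by simp
  have hrmC : rootMultiplicity z (C (-1) : ℂ[X]) = 0 :=
    rootMultiplicity_eq_zero (by simp [IsRoot])
  rw [hfac, rootMultiplicity_mul (mul_ne_zero hCne hne), hrmC, zero_add]
  have hsep : Separable ((X : ℂ[X]) ^ k - C 1) :=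
    separable_X_pow_sub_C 1 (Nat.cast_ne_zero.2 hk.ne') one_ne_zero
  rw [map_one] at hsep
  split_ifs with hz
  · refine le_antisymm (rootMultiplicity_le_one_of_separable hsep z) ?_
    exact (rootMultiplicity_pos hne).2 (by simp [IsRoot, hz])
  · exact rootMultiplicity_eq_zero (by simp [IsRoot, sub_eq_zero, hz])

lemma prod_one_sub_X_pow_ne_zero (s : Multiset ℕ) (hs : ∀ x ∈ s, 0 < x) :
    ((s.map fun k => (1 : ℂ[X]) - X ^ k).prod) ≠ 0 := by
  apply Multiset.prod_ne_zero
  intro h0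
  obtain ⟨k, hk, hk0⟩ := Multiset.mem_map.1 h0
  exact one_sub_X_pow_ne_zero (F := ℂ) (hs k hk) hk0

lemma rootMultiplicity_prod_one_sub_X_pow {d : ℕ} {z : ℂ} (hz : IsPrimitiveRoot z d)
    (s : Multiset ℕ) (hs : ∀ x ∈ s, 0 < x) :
    rootMultiplicity z ((s.map fun k => (1 : ℂ[X]) - X ^ k).prod) = s.countP (d ∣ ·) := by
  induction s using Multiset.induction_on with
  | empty =>
    simp only [Multiset.map_zero, Multiset.prod_zero, Multiset.countP_zero]
    exact rootMultiplicity_eq_zero (by simp [IsRoot])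
  | cons a s ih =>
    have ha : 0 < a := hs a (Multiset.mem_cons_self a s)
    have hs' : ∀ x ∈ s, 0 < x := fun x hx => hs x (Multiset.mem_cons_of_mem hx)
    rw [Multiset.map_cons, Multiset.prod_cons,
      rootMultiplicity_mul (mul_ne_zero (one_sub_X_pow_ne_zero ha)
        (prod_one_sub_X_pow_ne_zero s hs')),
      ih hs', rootMultiplicity_one_sub_X_pow ha, Multiset.countP_cons]
    have : z ^ a = 1 ↔ d ∣ a := hz.pow_eq_one_iff_dvd a
    by_cases hda : d ∣ a <;> simp [hda, this, add_comm]

lemma multiset_eq_of_prod_eq (S T : Multiset ℕ)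
    (hS : ∀ x ∈ S, 0 < x) (hT : ∀ x ∈ T, 0 < x)
    (h : (S.map fun k => (1 : ℂ[X]) - X ^ k).prod = (T.map fun k => (1 : ℂ[X]) - X ^ k).prod) :
    S = T := by
  refine multiset_eq_of_countP_dvd S T hS hT fun d hd => ?_
  have hz := Complex.isPrimitiveRoot_exp d hd.ne'
  rw [← rootMultiplicity_prod_one_sub_X_pow hz S hS,
    ← rootMultiplicity_prod_one_sub_X_pow hz T hT, h]



open Finset

/-- The q-number `[n]_q = 1 + q + ⋯ + q^{n-1}` as a rational function over ℚ. -/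
noncomputable def qnum (n : ℕ) : RatFunc ℚ := ∑ i ∈ Finset.range n, RatFunc.X ^ i

/-- The q-factorial `[n]_q! = ∏_{i=1}^n [i]_q`. -/
noncomputable def qfact (n : ℕ) : RatFunc ℚ := ∏ i ∈ Finset.range n, qnum (i + 1)

/-- The q-binomial coefficient `[m+n]_q! / ([m]_q! [n]_q!)`. -/
noncomputable def qbinom (m n : ℕ) : RatFunc ℚ := qfact (m + n) / (qfact m * qfact n)

/-- The q-multinomial coefficient of a list of nonnegative integers. -/
noncomputable def qmultinomial (l : List ℕ) : RatFunc ℚ :=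
  qfact l.sum / (l.map qfact).prod

/-- Plane rooted trees: a root together with an ordered list of subtrees. -/
inductive PTree where
  | node : List PTree → PTree

namespace PTree

/-- Number of edges of a rooted tree. -/
def edges : PTree → ℕ
  | node ts => (ts.attach.map fun t => edges t.1 + 1).sum
decreasing_by simp only [PTree.node.sizeOf_spec, Nat.add_comm 1]; exact Nat.lt_succ_of_lt (List.sizeOf_lt_of_mem t.2)

/-- Multiset of descendant counts `d(v)` over the non-root vertices of `T`. -/
def ND : PTree → Multiset ℕ
  | node ts => (ts.attach.map fun t => edges t.1 ::ₘ ND t.1).sum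
decreasing_by simp only [PTree.node.sizeOf_spec, Nat.add_comm 1]; exact Nat.lt_succ_of_lt (List.sizeOf_lt_of_mem t.2)

/-- Multiset `D(T) = {d(v) : v ∈ V(T)}` of descendant counts over all vertices. -/
def D (t : PTree) : Multiset ℕ := edges t ::ₘ ND t

/-- The plucking polynomial `Q(T) = [d(r)]_q! / ∏_{v ≠ r} [d(v)+1]_q`. -/
noncomputable def Q (t : PTree) : RatFunc ℚ :=
  qfact (edges t) / ((ND t).map fun x => qnum (x + 1)).prod

end PTree

/-- If `a₁ ≥ ⋯ ≥ a_n`, `b₁ ≥ ⋯ ≥ b_m` are nonnegative integers (here 0-indexed) with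
`a₁ > a₂ + 1`, `b₁ > b₂ + 1`, `n = a₁ + 1`, `m = b₁ + 1`, and
`∏_{i=1}^{a₁}(1−q^i)/∏_{i=2}^{n}(1−q^{a_i+1}) = ∏_{i=1}^{b₁}(1−q^i)/∏_{i=2}^{m}(1−q^{b_i+1})`
as rational functions, then `n = m` and `a_i = b_i` for all `i`. -/
theorem eq_of_ratfunc_eq (n m : ℕ) (a b : ℕ → ℕ)
    (ha : ∀ i j, i ≤ j → j < n → a j ≤ a i) (hb : ∀ i j, i ≤ j → j < m → b j ≤ b i)
    (hn2 : 2 ≤ n) (hm2 : 2 ≤ m)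
    (ha1 : a 1 + 1 < a 0) (hb1 : b 1 + 1 < b 0)
    (hn : n = a 0 + 1) (hm : m = b 0 + 1)
    (heq : (∏ i ∈ Finset.range (a 0), (1 - RatFunc.X ^ (i + 1))) /
             (∏ i ∈ Finset.Ico 1 n, (1 - RatFunc.X ^ (a i + 1))) =
           (∏ i ∈ Finset.range (b 0), ((1 : RatFunc ℚ) - RatFunc.X ^ (i + 1))) /
             (∏ i ∈ Finset.Ico 1 m, (1 - RatFunc.X ^ (b i + 1)))) :
    n = m ∧ ∀ i < n, a i = b i := by
  classical
  have ha0pos : 0 < a 0 := by omega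
  have hb0pos : 0 < b 0 := by omega
  -- Step 1: transfer the rational-function identity to a multiset identity
  set φ := algebraMap ℚ[X] (RatFunc ℚ) with hφ
  have key : ∀ (s : Finset ℕ) (f : ℕ → ℕ),
      (∏ i ∈ s, ((1 : RatFunc ℚ) - RatFunc.X ^ f i)) = φ (∏ i ∈ s, (1 - Polynomial.X ^ f i)) := by
    intro s f
    rw [map_prod]
    exact Finset.prod_congr rfl fun i _ => by rw [map_sub, map_one, map_pow, RatFunc.algebraMap_X]
  rw [key (Finset.range (a 0)) (fun i => i + 1), key (Finset.Ico 1 n) (fun i => a i + 1),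
    key (Finset.range (b 0)) (fun i => i + 1), key (Finset.Ico 1 m) (fun i => b i + 1)] at heq
  have hQA : (∏ i ∈ Finset.Ico 1 n, (1 - Polynomial.X ^ (a i + 1) : ℚ[X])) ≠ 0 :=
    Finset.prod_ne_zero_iff.2 fun i _ => one_sub_X_pow_ne_zero (Nat.succ_pos _)
  have hQB : (∏ i ∈ Finset.Ico 1 m, (1 - Polynomial.X ^ (b i + 1) : ℚ[X])) ≠ 0 :=
    Finset.prod_ne_zero_iff.2 fun i _ => one_sub_X_pow_ne_zero (Nat.succ_pos _)
  have hinj : Function.Injective φ := IsFractionRing.injective ℚ[X] (RatFunc ℚ)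
  rw [div_eq_div_iff ((map_ne_zero_iff φ hinj).2 hQA) ((map_ne_zero_iff φ hinj).2 hQB),
    ← map_mul, ← map_mul] at heq
  have hpq := hinj heq
  have hC := congrArg (Polynomial.map (algebraMap ℚ ℂ)) hpq
  simp only [Polynomial.map_mul, Polynomial.map_prod, Polynomial.map_sub, Polynomial.map_one,
    Polynomial.map_pow, Polynomial.map_X] at hC
  have conv1 : ∀ (N : ℕ) (g : ℕ → ℕ),
      (∏ i ∈ Finset.range N, ((1 : ℂ[X]) - Polynomial.X ^ g i)) =
        (((Multiset.range N).map g).map fun k => (1 : ℂ[X]) - Polynomial.X ^ k).prod := by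
    intro N g
    rw [Finset.prod_eq_multiset_prod, Finset.range_val, Multiset.map_map]
    rfl
  have conv2 : ∀ (N : ℕ) (g : ℕ → ℕ), 2 ≤ N →
      (∏ i ∈ Finset.Ico 1 N, ((1 : ℂ[X]) - Polynomial.X ^ g i)) =
        (((Multiset.range (N - 1)).map (fun i => g (1 + i))).map
          fun k => (1 : ℂ[X]) - Polynomial.X ^ k).prod := by
    intro N g _
    rw [Finset.prod_Ico_eq_prod_range]
    exact conv1 (N - 1) (fun i => g (1 + i))
  rw [conv1 (a 0) (fun i => i + 1), conv1 (b 0) (fun i => i + 1),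
    conv2 n (fun i => a i + 1) hn2, conv2 m (fun i => b i + 1) hm2,
    ← Multiset.prod_add, ← Multiset.prod_add, ← Multiset.map_add, ← Multiset.map_add] at hC
  have hST : (Multiset.range (a 0)).map (· + 1) +
        (Multiset.range (m - 1)).map (fun i => b (1 + i) + 1) =
      (Multiset.range (b 0)).map (· + 1) +
        (Multiset.range (n - 1)).map (fun i => a (1 + i) + 1) := by
    refine multiset_eq_of_prod_eq _ _ ?_ ?_ hC
    all_goals
      intro x hx
      rcases Multiset.mem_add.1 hx with h1 | h1 <;>
        obtain ⟨i, -, rfl⟩ := Multiset.mem_map.1 h1 <;> exact Nat.succ_pos _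
  -- Step 2: a 0 = b 0
  have hab : a 0 = b 0 := by
    have h1 : a 0 ≤ b 0 := by
      have haS : a 0 ∈ (Multiset.range (a 0)).map (· + 1) +
          (Multiset.range (m - 1)).map (fun i => b (1 + i) + 1) :=
        Multiset.mem_add.2 (Or.inl (Multiset.mem_map.2
          ⟨a 0 - 1, Multiset.mem_range.2 (by omega), by omega⟩))
      rw [hST] at haS
      rcases Multiset.mem_add.1 haS with h | h
      · obtain ⟨x, hx, hxe⟩ := Multiset.mem_map.1 h
        have := Multiset.mem_range.1 hx
        omega
      · obtain ⟨i, hi, hie⟩ := Multiset.mem_map.1 h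
        have hi' := Multiset.mem_range.1 hi
        have : a (1 + i) ≤ a 1 := ha 1 (1 + i) (by omega) (by omega)
        omega
    have h2 : b 0 ≤ a 0 := by
      have hbT : b 0 ∈ (Multiset.range (b 0)).map (· + 1) +
          (Multiset.range (n - 1)).map (fun i => a (1 + i) + 1) :=
        Multiset.mem_add.2 (Or.inl (Multiset.mem_map.2
          ⟨b 0 - 1, Multiset.mem_range.2 (by omega), by omega⟩))
      rw [← hST] at hbT
      rcases Multiset.mem_add.1 hbT with h | h
      · obtain ⟨x, hx, hxe⟩ := Multiset.mem_map.1 h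
        have := Multiset.mem_range.1 hx
        omega
      · obtain ⟨i, hi, hie⟩ := Multiset.mem_map.1 h
        have hi' := Multiset.mem_range.1 hi
        have : b (1 + i) ≤ b 1 := hb 1 (1 + i) (by omega) (by omega)
        omega
    omega
  have hnm : n = m := by omega
  -- Step 3: cancel the common parts and compare sorted lists
  rw [hab, ← hnm] at hST
  have hparts : (Multiset.range (n - 1)).map (fun i => b (1 + i) + 1) =
      (Multiset.range (n - 1)).map (fun i => a (1 + i) + 1) := add_left_cancel hST
  have hparts' : (Multiset.range (n - 1)).map (fun i => b (1 + i)) =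
      (Multiset.range (n - 1)).map (fun i => a (1 + i)) := by
    have h := congrArg (Multiset.map (fun x => x - 1)) hparts
    rw [Multiset.map_map, Multiset.map_map] at h
    simpa [Function.comp] using h
  have hperm : List.Perm ((List.range (n - 1)).map fun i => b (1 + i))
      ((List.range (n - 1)).map fun i => a (1 + i)) := by
    rw [← Multiset.coe_eq_coe, ← Multiset.map_coe, ← Multiset.map_coe]
    exact hparts'
  have hsorted : ∀ (f : ℕ → ℕ), (∀ i j, i ≤ j → j < n → f j ≤ f i) →
      List.Pairwise (· ≥ ·) ((List.range (n - 1)).map fun i => f (1 + i)) := by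
    intro f hf
    rw [List.pairwise_map]
    refine (List.pairwise_lt_range (n := n - 1)).imp_of_mem ?_
    intro i j hi hj hij
    exact hf (1 + i) (1 + j) (by omega) (by have := List.mem_range.1 hj; omega)
  have hlist : ((List.range (n - 1)).map fun i => b (1 + i)) =
      ((List.range (n - 1)).map fun i => a (1 + i)) :=
    List.Perm.eq_of_pairwise (fun _ _ _ _ h1 h2 => le_antisymm h2 h1) (hsorted b (hnm ▸ hb)) (hsorted a ha) hperm
  refine ⟨hnm, fun i hi => ?_⟩
  rcases Nat.eq_zero_or_pos i with rfl | hipos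
  · exact hab
  · have hj : i - 1 < n - 1 := by omega
    have h1 := congrArg (fun l => l[i - 1]?) hlist
    simp only [List.getElem?_map, List.getElem?_range hj, Option.map_some] at h1
    have : a (1 + (i - 1)) = b (1 + (i - 1)) := (Option.some.inj h1).symm
    rwa [show 1 + (i - 1) = i by omega] at this
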